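/- Let δ ≥ 0, ζ ≥ ζ₀ ≥ 0 and t ≥ T > 0 be real numbers such that ζ ≤ 2t(δ+1). Then Σ_{n=2}^∞ e^{−t·n·(n+δ)}·(n+δ)^ζ ≤ (1/(2T))·(√(2π)·√(ζ₀+1)·e^{−ζ₀+1/(12(ζ₀+1))} + 1)·e^{−2t(1+δ)}·2^ζ·(1+δ)^ζ. -/

import Mathlib

open Real

private lemma term_bound (δ ζ ζ₀ t : ℝ) (hδ : 0 ≤ δ) (hζ₀ : 0 ≤ ζ₀) (hζ : ζ₀ ≤ ζ)
    (ht : 0 < t) (hcond : ζ ≤ 2 * t * (δ + 1)) (m : ℝ) (hm : 3 ≤ m) :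
    Real.exp (-t * m * (m + δ)) * (m + δ) ^ ζ ≤
      Real.exp (-2 * t * (1 + δ)) * (2 * (1 + δ)) ^ ζ * Real.exp (-ζ₀) *
        Real.exp (-(t * (5 * m - 14))) := by
  have h1δ : (0:ℝ) < 1 + δ := by linarith
  have hden : (0:ℝ) < 2 * (1 + δ) := by linarith
  set r : ℝ := (m + δ) / (2 * (1 + δ)) with hrdef
  have hrpos : 0 < r := div_pos (by linarith) hden
  have hmδ : m + δ = 2 * (1 + δ) * r := by rw [hrdef]; field_simp
  have hr2 : (1:ℝ)/2 ≤ r := by rw [hrdef, le_div_iff₀ hden]; linarith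
  have hlog_ub : 2 * (1 + δ) * Real.log r ≤ m - 2 - δ := by
    have h := Real.log_le_sub_one_of_pos hrpos
    nlinarith [h, hden]
  have hlog_lb : -1 ≤ Real.log r := by
    have h2 : Real.log (1/2) ≤ Real.log r := Real.log_le_log (by norm_num) hr2
    have h3 : Real.log (1/2) = -Real.log 2 := by rw [one_div, Real.log_inv]
    have h4 : Real.log 2 ≤ 1 := by
      have := Real.log_le_sub_one_of_pos (by norm_num : (0:ℝ) < 2); linarith
    linarith
  have hpow : (m + δ) ^ ζ = (2 * (1 + δ)) ^ ζ * Real.exp (Real.log r * ζ) := by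
    rw [hmδ, Real.mul_rpow hden.le hrpos.le, Real.rpow_def_of_pos hrpos]
  have hPnn : (0:ℝ) ≤ (2 * (1 + δ)) ^ ζ := Real.rpow_nonneg hden.le ζ
  have hexp : -t * m * (m + δ) + Real.log r * ζ ≤
      -2 * t * (1 + δ) + (-ζ₀ + -(t * (5 * m - 14))) := by
    have hc : ζ * (Real.log r + 1) ≤ 2 * t * (δ + 1) * (Real.log r + 1) :=
      mul_le_mul_of_nonneg_right hcond (by linarith)
    have hlu : t * (2 * (1 + δ) * Real.log r) ≤ t * (m - 2 - δ) :=
      mul_le_mul_of_nonneg_left hlog_ub ht.le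
    have hbr : 0 ≤ t * ((m - 3)^2 + 3 + δ * (m - 3)) := by
      apply mul_nonneg ht.le
      nlinarith [sq_nonneg (m - 3), mul_nonneg hδ (by linarith : (0:ℝ) ≤ m - 3)]
    nlinarith [hc, hlu, hbr, hζ]
  calc Real.exp (-t * m * (m + δ)) * (m + δ) ^ ζ
      = (2 * (1 + δ)) ^ ζ * Real.exp (-t * m * (m + δ) + Real.log r * ζ) := by
        rw [hpow, Real.exp_add]; ring
    _ ≤ (2 * (1 + δ)) ^ ζ *
        Real.exp (-2 * t * (1 + δ) + (-ζ₀ + -(t * (5 * m - 14)))) := by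
        exact mul_le_mul_of_nonneg_left (Real.exp_le_exp.mpr hexp) hPnn
    _ = Real.exp (-2 * t * (1 + δ)) * (2 * (1 + δ)) ^ ζ * Real.exp (-ζ₀) *
        Real.exp (-(t * (5 * m - 14))) := by
        rw [Real.exp_add, Real.exp_add]; ring

theorem tail_sum_bound (δ ζ ζ₀ t T : ℝ) (hδ : 0 ≤ δ) (hζ₀ : 0 ≤ ζ₀) (hζ : ζ₀ ≤ ζ)
    (hT : 0 < T) (ht : T ≤ t) (hcond : ζ ≤ 2 * t * (δ + 1)) :
    (∑' n : ℕ, Real.exp (-t * ((n : ℝ) + 2) * (((n : ℝ) + 2) + δ)) * (((n : ℝ) + 2) + δ) ^ ζ) ≤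
      1 / (2 * T) *
        (Real.sqrt (2 * π) * Real.sqrt (ζ₀ + 1) * Real.exp (-ζ₀ + 1 / (12 * (ζ₀ + 1))) + 1) *
        Real.exp (-2 * t * (1 + δ)) * 2 ^ ζ * (1 + δ) ^ ζ := by
  have hζnn : 0 ≤ ζ := le_trans hζ₀ hζ
  have ht0 : 0 < t := lt_of_lt_of_le hT ht
  have h1δ : (0:ℝ) < 1 + δ := by linarith
  set E : ℝ := Real.exp (-2 * t * (1 + δ)) with hE
  set G : ℝ := Real.sqrt (2 * π) * Real.sqrt (ζ₀ + 1) * Real.exp (-ζ₀ + 1 / (12 * (ζ₀ + 1))) with hG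
  set u : ℕ → ℝ := fun n : ℕ =>
    Real.exp (-t * ((n : ℝ) + 2) * (((n : ℝ) + 2) + δ)) * (((n : ℝ) + 2) + δ) ^ ζ with hu
  set P : ℝ := (2 * (1 + δ)) ^ ζ with hPdef
  have hEpos : 0 < E := Real.exp_pos _
  have hPpos : 0 < P := Real.rpow_pos_of_pos (by linarith) ζ
  set q : ℝ := Real.exp (-(5 * t)) with hq
  have hq0 : 0 < q := Real.exp_pos _
  have hq1 : q < 1 := by
    rw [hq, show (1:ℝ) = Real.exp 0 from Real.exp_zero.symm]
    exact Real.exp_lt_exp.mpr (by linarith)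
  set C1 : ℝ := E * P * Real.exp (-ζ₀) * Real.exp (-t) with hC1
  have hnn : ∀ n : ℕ, 0 ≤ u n := fun n =>
    mul_nonneg (Real.exp_pos _).le (Real.rpow_nonneg (by positivity) _)
  have hsucc : ∀ k : ℕ, u (k + 1) ≤ C1 * q ^ k := by
    intro k
    have hm : (3:ℝ) ≤ (k:ℝ) + 3 := by
      have := Nat.cast_nonneg (α := ℝ) k; linarith
    have hb := term_bound δ ζ ζ₀ t hδ hζ₀ hζ ht0 hcond ((k:ℝ) + 3) hm
    have e1 : ((k + 1 : ℕ) : ℝ) + 2 = (k : ℝ) + 3 := by push_cast; ring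
    have e2 : u (k + 1) =
        Real.exp (-t * ((k:ℝ) + 3) * (((k:ℝ) + 3) + δ)) * (((k:ℝ) + 3) + δ) ^ ζ := by
      simp only [hu]; rw [e1]
    rw [e2]
    refine le_trans hb (le_of_eq ?_)
    rw [show -(t * (5 * ((k:ℝ) + 3) - 14)) = -t + (k:ℝ) * (-(5 * t)) from by ring,
      Real.exp_add, Real.exp_nat_mul]
    rw [hC1, hq]; ring
  have hgeo : Summable (fun k : ℕ => C1 * q ^ k) :=
    (summable_geometric_of_lt_one hq0.le hq1).mul_left _
  have hsum1 : Summable (fun k : ℕ => u (k + 1)) :=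
    Summable.of_nonneg_of_le (fun k => hnn _) hsucc hgeo
  have hsum : Summable u := (summable_nat_add_iff 1).mp hsum1
  -- bound on the first term
  have h0 : u 0 ≤ 1 / (2 * T) * E * P := by
    have e0 : u 0 = Real.exp (-t * 2 * (2 + δ)) * (2 + δ) ^ ζ := by
      simp only [hu]; norm_num
    have hsplit : Real.exp (-t * 2 * (2 + δ)) = E * Real.exp (-(2 * t)) := by
      rw [hE, ← Real.exp_add]; congr 1; ring
    have hexp : Real.exp (-(2 * t)) ≤ 1 / (2 * T) := by
      have h1 : Real.exp (-(2 * t)) ≤ 1 / (2 * t) := by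
        rw [Real.exp_neg, one_div]
        exact inv_anti₀ (by linarith) (by linarith [Real.add_one_le_exp (2 * t)])
      have h2 : 1 / (2 * t) ≤ 1 / (2 * T) :=
        one_div_le_one_div_of_le (by linarith) (by linarith)
      linarith
    have hpow2 : (2 + δ) ^ ζ ≤ P := by
      rw [hPdef]; exact Real.rpow_le_rpow (by linarith) (by linarith) hζnn
    calc u 0 = E * Real.exp (-(2 * t)) * (2 + δ) ^ ζ := by rw [e0, hsplit]
      _ ≤ E * (1 / (2 * T)) * P := by
          apply mul_le_mul (mul_le_mul_of_nonneg_left hexp hEpos.le) hpow2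
            (Real.rpow_nonneg (by linarith) ζ) (by positivity)
      _ = 1 / (2 * T) * E * P := by ring
  -- bound on the tail
  have h1tail : (∑' k : ℕ, u (k + 1)) ≤ C1 * (1 - q)⁻¹ := by
    calc (∑' k : ℕ, u (k + 1)) ≤ ∑' k : ℕ, C1 * q ^ k := Summable.tsum_le_tsum hsucc hsum1 hgeo
      _ = C1 * ∑' k : ℕ, q ^ k := tsum_mul_left
      _ = C1 * (1 - q)⁻¹ := by rw [tsum_geometric_of_lt_one hq0.le hq1]
  have h1q : 0 < 1 - q := by linarith
  -- key numeric estimate : exp(-t) * (1-q)⁻¹ ≤ (5/4)/T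
  have hA1 : Real.exp (-t) ≤ 1 := by
    rw [show (1:ℝ) = Real.exp 0 from Real.exp_zero.symm]
    exact Real.exp_le_exp.mpr (by linarith)
  have h2tA : 2 * t * Real.exp (-t) ≤ 1 := by
    have he1 : (2:ℝ) ≤ Real.exp 1 := by nlinarith [Real.exp_one_gt_d9]
    have h' : t ≤ Real.exp (t - 1) := by linarith [Real.add_one_le_exp (t - 1)]
    have h2t : 2 * t ≤ Real.exp t := by
      calc 2 * t = t * 2 := by ring
        _ ≤ Real.exp (t - 1) * Real.exp 1 :=
            mul_le_mul h' he1 (by norm_num) (Real.exp_pos _).le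
        _ = Real.exp t := by rw [← Real.exp_add]; ring_nf
    calc 2 * t * Real.exp (-t) ≤ Real.exp t * Real.exp (-t) :=
          mul_le_mul_of_nonneg_right h2t (Real.exp_pos _).le
      _ = 1 := by rw [← Real.exp_add]; simp
  have h5tB : (5 * t + 1) * q ≤ 1 := by
    have h' : 5 * t + 1 ≤ Real.exp (5 * t) := Real.add_one_le_exp (5 * t)
    calc (5 * t + 1) * q ≤ Real.exp (5 * t) * q := mul_le_mul_of_nonneg_right h' hq0.le
      _ = 1 := by rw [hq, ← Real.exp_add]; simp
  have hf1 : (0:ℝ) ≤ 25 - 20 * t * Real.exp (-t) - 4 * Real.exp (-t) := by linarith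
  have hnum : 0 ≤ t * (25 - 20 * t * Real.exp (-t) - 4 * Real.exp (-t)) +
      5 * (1 - (5 * t + 1) * q) := by
    have := mul_nonneg ht0.le hf1
    linarith
  have hkey : Real.exp (-t) * (4 * t) ≤ 5 * (1 - q) := by
    have h5t1 : (0:ℝ) < 5 * t + 1 := by linarith
    have hmul : 0 ≤ (5 * (1 - q) - Real.exp (-t) * (4 * t)) * (5 * t + 1) := by
      nlinarith [hnum]
    have := (mul_nonneg_iff_of_pos_right h5t1).mp hmul
    linarith
  have hX : Real.exp (-t) * (1 - q)⁻¹ ≤ 5 / 4 / T := by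
    rw [mul_inv_le_iff₀ h1q]
    have e1 : Real.exp (-t) ≤ 5 * (1 - q) / (4 * t) := by
      rw [le_div_iff₀ (by positivity)]; linarith [hkey]
    have e2 : 5 * (1 - q) / (4 * t) ≤ 5 * (1 - q) / (4 * T) := by
      gcongr <;> linarith
    have e3 : 5 * (1 - q) / (4 * T) = 5 / 4 / T * (1 - q) := by
      field_simp
    linarith
  -- G lower bound
  have hG52 : 5 / 2 * Real.exp (-ζ₀) ≤ G := by
    have hsq : (5/2:ℝ) ≤ Real.sqrt (2 * π) := by
      have hpi : ((5:ℝ)/2)^2 ≤ 2 * π := by nlinarith [Real.pi_gt_d6]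
      calc (5/2:ℝ) = Real.sqrt ((5/2)^2) := (Real.sqrt_sq (by norm_num)).symm
        _ ≤ Real.sqrt (2 * π) := Real.sqrt_le_sqrt hpi
    have hsq2 : (1:ℝ) ≤ Real.sqrt (ζ₀ + 1) := by
      have h := Real.sqrt_le_sqrt (show (1:ℝ) ≤ ζ₀ + 1 by linarith)
      rwa [Real.sqrt_one] at h
    have hex : Real.exp (-ζ₀) ≤ Real.exp (-ζ₀ + 1 / (12 * (ζ₀ + 1))) := by
      apply Real.exp_le_exp.mpr
      have : (0:ℝ) < 1 / (12 * (ζ₀ + 1)) := by positivity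
      linarith
    have s1 : 5 / 2 * Real.exp (-ζ₀) ≤ Real.sqrt (2 * π) * Real.exp (-ζ₀) :=
      mul_le_mul_of_nonneg_right hsq (Real.exp_pos _).le
    have s2 : Real.sqrt (2 * π) * Real.exp (-ζ₀) ≤
        Real.sqrt (2 * π) * (Real.sqrt (ζ₀ + 1) * Real.exp (-ζ₀ + 1 / (12 * (ζ₀ + 1)))) := by
      apply mul_le_mul_of_nonneg_left _ (Real.sqrt_nonneg _)
      calc Real.exp (-ζ₀) = 1 * Real.exp (-ζ₀) := (one_mul _).symm
        _ ≤ Real.sqrt (ζ₀ + 1) * Real.exp (-ζ₀ + 1 / (12 * (ζ₀ + 1))) :=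
            mul_le_mul hsq2 hex (Real.exp_pos _).le (Real.sqrt_nonneg _)
    have : G = Real.sqrt (2 * π) * (Real.sqrt (ζ₀ + 1) *
        Real.exp (-ζ₀ + 1 / (12 * (ζ₀ + 1)))) := by rw [hG, mul_assoc]
    linarith
  -- tail total bound
  have h2 : C1 * (1 - q)⁻¹ ≤ 1 / (2 * T) * G * E * P := by
    have hS : Real.exp (-ζ₀) * (Real.exp (-t) * (1 - q)⁻¹) ≤ 1 / (2 * T) * G := by
      calc Real.exp (-ζ₀) * (Real.exp (-t) * (1 - q)⁻¹)
          ≤ Real.exp (-ζ₀) * (5 / 4 / T) :=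
            mul_le_mul_of_nonneg_left hX (Real.exp_pos _).le
        _ = 1 / (2 * T) * (5 / 2 * Real.exp (-ζ₀)) := by field_simp; ring
        _ ≤ 1 / (2 * T) * G := by
            apply mul_le_mul_of_nonneg_left hG52 (by positivity)
    calc C1 * (1 - q)⁻¹ = (E * P) * (Real.exp (-ζ₀) * (Real.exp (-t) * (1 - q)⁻¹)) := by
          rw [hC1]; ring
      _ ≤ (E * P) * (1 / (2 * T) * G) := by
          apply mul_le_mul_of_nonneg_left hS (by positivity)
      _ = 1 / (2 * T) * G * E * P := by ring
  have hP : (2:ℝ) ^ ζ * (1 + δ) ^ ζ = P := by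
    rw [hPdef, Real.mul_rpow (by norm_num) (by linarith)]
  have hRHS : 1 / (2 * T) * (G + 1) * E * (2:ℝ) ^ ζ * (1 + δ) ^ ζ =
      1 / (2 * T) * E * P + 1 / (2 * T) * G * E * P := by
    rw [← hP]; ring
  calc (∑' n : ℕ, u n) = u 0 + ∑' k : ℕ, u (k + 1) := hsum.tsum_eq_zero_add
    _ ≤ 1 / (2 * T) * E * P + 1 / (2 * T) * G * E * P := by
        have := le_trans h1tail h2; linarith
    _ = 1 / (2 * T) * (G + 1) * E * (2:ℝ) ^ ζ * (1 + δ) ^ ζ := hRHS.symm
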